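/- Let 𝒳 ⊆ ℝ^n be a nonempty convex set with ‖x − y‖ ≤ R for all x, y ∈ 𝒳, let α, μ > 0, ε > 0, G, M, V̄ ≥ 0 with d ∈ ℝ^n, ‖d‖ ≤ G, and λ ∈ ℝ^m with λ ≥ 0. Let g, g' : ℝ^n → ℝ^m, with the components of g convex, suppose there is x̃ ∈ 𝒳 with g(x̃) ≤ −ε·1, suppose ‖[g'(x) − g(x)]^+‖ ≤ V̄ for all x ∈ 𝒳, let x₀ ∈ 𝒳 and let x⁺ minimize ⟨d, x − x₀⟩ + ⟨λ, g(x)⟩ + ‖x − x₀‖²/(2α) over 𝒳, and assume ‖g'(x⁺)‖ ≤ M. Define λ' := [λ + μ·g'(x⁺)]^+. Then (‖λ'‖² − ‖λ‖²)/2 ≤ μ·(V̄ − ε)·‖λ‖ + 2·μ·G·R + μ·R²/(2α) + μ²·M²/2. -/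

import Mathlib

open scoped RealInnerProductSpace

/-- Entrywise positive projection on `ℝ^m`. -/
noncomputable def posProj {m : ℕ} (v : EuclideanSpace ℝ (Fin m)) :
    EuclideanSpace ℝ (Fin m) := WithLp.toLp 2 (fun i => max (v i) 0)

lemma norm_posProj_le {m : ℕ} (v : EuclideanSpace ℝ (Fin m)) : ‖posProj v‖ ≤ ‖v‖ := by
  rw [EuclideanSpace.norm_eq, EuclideanSpace.norm_eq]
  apply Real.sqrt_le_sqrt
  apply Finset.sum_le_sum
  intro i _
  have h1 : ‖posProj v i‖ ≤ ‖v i‖ := by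
    simp only [posProj, PiLp.toLp_apply, Real.norm_eq_abs]
    rw [abs_of_nonneg (le_max_right _ _)]
    exact max_le (le_abs_self _) (abs_nonneg _)
  exact pow_le_pow_left₀ (norm_nonneg _) h1 2

lemma inner_expand {m : ℕ} (x y : EuclideanSpace ℝ (Fin m)) :
    ⟪x, y⟫ = ∑ i, x i * y i := by
  simp [PiLp.inner_apply, RCLike.inner_apply, mul_comm]

lemma norm_le_sum {m : ℕ} (v : EuclideanSpace ℝ (Fin m)) (h : ∀ i, 0 ≤ v i) :
    ‖v‖ ≤ ∑ i, v i := by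
  rw [EuclideanSpace.norm_eq]
  have : ∑ i, ‖v i‖ ^ 2 ≤ (∑ i, v i) ^ 2 := by
    calc ∑ i, ‖v i‖ ^ 2 = ∑ i, (v i) ^ 2 := by
          refine Finset.sum_congr rfl fun i _ => ?_
          rw [Real.norm_eq_abs, sq_abs]
      _ ≤ (∑ i, v i) ^ 2 := Finset.sum_sq_le_sq_sum_of_nonneg (fun i _ => h i)
  calc Real.sqrt (∑ i, ‖v i‖ ^ 2) ≤ Real.sqrt ((∑ i, v i) ^ 2) := Real.sqrt_le_sqrt this
    _ = ∑ i, v i := Real.sqrt_sq (Finset.sum_nonneg fun i _ => h i)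

/-- Dual-drift bound at a MOSP step (inequality (14) in the proof of Theorem 1). -/
theorem dual_drift_step_bound {n m : ℕ} (hm : 0 < m)
    (X : Set (EuclideanSpace ℝ (Fin n))) (hXne : X.Nonempty) (hXconv : Convex ℝ X)
    (R α μ ε G M Vbar : ℝ) (hα : 0 < α) (hμ : 0 < μ) (hε : 0 < ε)
    (hG : 0 ≤ G) (hM : 0 ≤ M) (hVbar : 0 ≤ Vbar)
    (hR : ∀ x ∈ X, ∀ y ∈ X, ‖x - y‖ ≤ R)
    (d : EuclideanSpace ℝ (Fin n)) (hd : ‖d‖ ≤ G)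
    (lam : EuclideanSpace ℝ (Fin m)) (hlam : ∀ i, 0 ≤ lam i)
    (g g' : EuclideanSpace ℝ (Fin n) → EuclideanSpace ℝ (Fin m))
    (hgconv : ∀ i, ConvexOn ℝ Set.univ fun x => g x i)
    (hSlater : ∃ xt ∈ X, ∀ i, g xt i ≤ -ε)
    (hvar : ∀ x ∈ X, ‖posProj (g' x - g x)‖ ≤ Vbar)
    (x₀ : EuclideanSpace ℝ (Fin n)) (hx₀ : x₀ ∈ X)
    (xp : EuclideanSpace ℝ (Fin n)) (hxpX : xp ∈ X)
    (hxpmin : ∀ z ∈ X,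
      ⟪d, xp - x₀⟫ + ⟪lam, g xp⟫ + ‖xp - x₀‖ ^ 2 / (2 * α) ≤
        ⟪d, z - x₀⟫ + ⟪lam, g z⟫ + ‖z - x₀‖ ^ 2 / (2 * α))
    (hgM : ‖g' xp‖ ≤ M)
    (lam' : EuclideanSpace ℝ (Fin m)) (hlam' : lam' = posProj (lam + μ • g' xp)) :
    (‖lam'‖ ^ 2 - ‖lam‖ ^ 2) / 2 ≤
      μ * (Vbar - ε) * ‖lam‖ + 2 * μ * G * R + μ * R ^ 2 / (2 * α) +
        μ ^ 2 * M ^ 2 / 2 := by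
  obtain ⟨xt, hxtX, hxt⟩ := hSlater
  have hR0 : 0 ≤ R := by
    have := hR x₀ hx₀ x₀ hx₀
    simpa using this
  -- Step 1: ‖lam'‖² ≤ ‖lam‖² + 2μ⟪lam, g' xp⟫ + μ²‖g' xp‖²
  have h1 : ‖lam'‖ ^ 2 ≤ ‖lam‖ ^ 2 + 2 * (μ * ⟪lam, g' xp⟫) + μ ^ 2 * ‖g' xp‖ ^ 2 := by
    have hle : ‖lam'‖ ≤ ‖lam + μ • g' xp‖ := hlam' ▸ norm_posProj_le _
    have hsq : ‖lam'‖ ^ 2 ≤ ‖lam + μ • g' xp‖ ^ 2 :=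
      pow_le_pow_left₀ (norm_nonneg _) hle 2
    have hexp : ‖lam + μ • g' xp‖ ^ 2
        = ‖lam‖ ^ 2 + 2 * (μ * ⟪lam, g' xp⟫) + μ ^ 2 * ‖g' xp‖ ^ 2 := by
      rw [@norm_add_sq_real, real_inner_smul_right, norm_smul]
      rw [mul_pow, Real.norm_eq_abs, sq_abs]
    linarith [hsq, hexp ▸ hsq]
  -- Step 2: ⟪lam, g' xp - g xp⟫ ≤ ‖lam‖ * Vbar
  have h2 : ⟪lam, g' xp - g xp⟫ ≤ ‖lam‖ * Vbar := by
    have ha : ⟪lam, g' xp - g xp⟫ ≤ ⟪lam, posProj (g' xp - g xp)⟫ := by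
      rw [inner_expand, inner_expand]
      refine Finset.sum_le_sum fun i _ => ?_
      exact mul_le_mul_of_nonneg_left (by simp [posProj]) (hlam i)
    calc ⟪lam, g' xp - g xp⟫ ≤ ⟪lam, posProj (g' xp - g xp)⟫ := ha
      _ ≤ ‖lam‖ * ‖posProj (g' xp - g xp)‖ := real_inner_le_norm _ _
      _ ≤ ‖lam‖ * Vbar := mul_le_mul_of_nonneg_left (hvar xp hxpX) (norm_nonneg _)
  -- Step 3: Slater: ⟪lam, g xt⟫ ≤ -ε * ‖lam‖
  have h3 : ⟪lam, g xt⟫ ≤ -ε * ‖lam‖ := by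
    have hs : ⟪lam, g xt⟫ ≤ -ε * ∑ i, lam i := by
      rw [inner_expand, Finset.mul_sum]
      refine Finset.sum_le_sum fun i _ => ?_
      have := mul_le_mul_of_nonneg_left (hxt i) (hlam i)
      linarith [this]
    have hnl : ‖lam‖ ≤ ∑ i, lam i := norm_le_sum lam hlam
    nlinarith [hε.le]
  -- Step 4: minimality at xt
  have h4 : ⟪lam, g xp⟫ ≤ G * R + R ^ 2 / (2 * α) - ε * ‖lam‖ := by
    have hmin := hxpmin xt hxtX
    have hdle : ⟪d, xt - x₀⟫ - ⟪d, xp - x₀⟫ ≤ G * R := by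
      have : ⟪d, xt - x₀⟫ - ⟪d, xp - x₀⟫ = ⟪d, xt - xp⟫ := by
        rw [← inner_sub_right]; congr 1; abel
      rw [this]
      calc ⟪d, xt - xp⟫ ≤ ‖d‖ * ‖xt - xp‖ := real_inner_le_norm _ _
        _ ≤ G * R := mul_le_mul hd (hR xt hxtX xp hxpX) (norm_nonneg _) hG
    have hxtR : ‖xt - x₀‖ ^ 2 / (2 * α) ≤ R ^ 2 / (2 * α) := by
      apply div_le_div_of_nonneg_right _ (by linarith)
      exact pow_le_pow_left₀ (norm_nonneg _) (hR xt hxtX x₀ hx₀) 2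
    have hxp0 : 0 ≤ ‖xp - x₀‖ ^ 2 / (2 * α) :=
      div_nonneg (sq_nonneg _) (by linarith)
    linarith [hmin, h3]
  -- assemble
  have h5 : ⟪lam, g' xp⟫ ≤ G * R + R ^ 2 / (2 * α) - ε * ‖lam‖ + ‖lam‖ * Vbar := by
    have : ⟪lam, g' xp⟫ = ⟪lam, g xp⟫ + ⟪lam, g' xp - g xp⟫ := by
      rw [← inner_add_right]; congr 1; abel
    linarith [this ▸ le_refl ⟪lam, g' xp⟫, h2, h4]
  have hM2 : ‖g' xp‖ ^ 2 ≤ M ^ 2 := pow_le_pow_left₀ (norm_nonneg _) hgM 2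
  have hGR : 0 ≤ μ * G * R := by positivity
  have heq : μ * R ^ 2 / (2 * α) = μ * (R ^ 2 / (2 * α)) := by ring
  nlinarith [h1, h5, hμ.le, sq_nonneg μ, heq, mul_le_mul_of_nonneg_left h5 hμ.le,
    mul_le_mul_of_nonneg_left hM2 (sq_nonneg μ)]
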